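/- Let ~ be the repetition pattern formed by pairwise disjoint 'active' intervals I_1, I_2, ... ⊆ ℕ, where on I_k (of length p_k) indices are equivalent iff their difference is a multiple of q_k, and q_k ≤ p_k ≤ α·q_k for a fixed real α > 1; indices outside all active intervals are equivalent only to themselves. Assume moreover that for each k the gap between consecutive active intervals is at least α times the sum of the lengths of the two adjacent intervals. Then for every interval A ⊆ ℕ of length ℓ, the number #_f A of equivalence classes meeting A satisfies #_f A ≥ ℓ/α. -/
import Mathlib

/-- The repetition-pattern relation given by active intervals `[a k, a k + p k)`
with periods `q k`: two indices are related iff they are equal, or lie in a common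
active interval and are congruent modulo its period. -/
def patRel (a p q : ℕ → ℕ) (i j : ℕ) : Prop :=
  i = j ∨ ∃ k, a k ≤ i ∧ i < a k + p k ∧ a k ≤ j ∧ j < a k + p k ∧ i ≡ j [MOD q k]

lemma patRel_refl (a p q : ℕ → ℕ) (i : ℕ) : patRel a p q i i := Or.inl rfl

lemma patRel_symm {a p q : ℕ → ℕ} {i j : ℕ} (h : patRel a p q i j) : patRel a p q j i := by
  rcases h with rfl | ⟨k, h1, h2, h3, h4, h5⟩
  · exact Or.inl rfl
  · exact Or.inr ⟨k, h3, h4, h1, h2, h5.symm⟩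

lemma a_le_a {a p : ℕ → ℕ} (horder : ∀ k, a k + p k ≤ a (k + 1)) : Monotone a :=
  monotone_nat_of_le_succ fun n => le_trans (Nat.le_add_right _ _) (horder n)

lemma a_add_le {a p : ℕ → ℕ} (horder : ∀ k, a k + p k ≤ a (k + 1)) {k k' : ℕ}
    (h : k < k') : a k + p k ≤ a k' :=
  le_trans (horder k) (a_le_a horder h)

lemma interval_eq {a p : ℕ → ℕ} (horder : ∀ k, a k + p k ≤ a (k + 1)) {k k' i : ℕ}
    (h1 : a k ≤ i) (h2 : i < a k + p k) (h3 : a k' ≤ i) (h4 : i < a k' + p k') : k = k' := by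
  rcases lt_trichotomy k k' with h | h | h
  · have := a_add_le horder h; omega
  · exact h
  · have := a_add_le horder h; omega

open scoped Classical in
noncomputable def minset (a p q : ℕ → ℕ) (s ℓ : ℕ) : Finset ℕ :=
  (Finset.Ico s (s + ℓ)).filter
    (fun i => ∀ j ∈ Finset.Ico s (s + ℓ), patRel a p q i j → i ≤ j)

lemma mem_minset {a p q : ℕ → ℕ} {s ℓ i : ℕ} :
    i ∈ minset a p q s ℓ ↔
      (i ∈ Finset.Ico s (s + ℓ) ∧ ∀ j ∈ Finset.Ico s (s + ℓ), patRel a p q i j → i ≤ j) := by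
  classical
  simp [minset]

lemma key (α : ℝ) (hα : 1 < α) (a p q : ℕ → ℕ)
    (hq : ∀ k, 1 ≤ q k)
    (hqp : ∀ k, q k ≤ p k ∧ (p k : ℝ) ≤ α * q k)
    (horder : ∀ k, a k + p k ≤ a (k + 1)) :
    ∀ ℓ s : ℕ, (ℓ : ℝ) ≤ α * (minset a p q s ℓ).card := by
  intro ℓ
  induction ℓ using Nat.strong_induction_on with
  | _ ℓ ih =>
    intro s
    rcases Nat.eq_zero_or_pos ℓ with rfl | hℓ
    · simp
      positivity
    by_cases hK : ∃ k, a k < s + ℓ ∧ s < a k + p k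
    · -- there is an active interval meeting [s, s+ℓ)
      obtain ⟨k₀, ⟨hk₀1, hk₀2⟩, hk₀min⟩ :
          ∃ k, (a k < s + ℓ ∧ s < a k + p k) ∧
            ∀ k', (a k' < s + ℓ ∧ s < a k' + p k') → k ≤ k' := by
        classical
        exact ⟨Nat.find hK, Nat.find_spec hK, fun k' h => Nat.find_min' hK h⟩
      set m := max s (a k₀) with hm
      set c := min (s + ℓ) (a k₀ + p k₀) with hc
      set b := min c (m + q k₀) with hb
      have hp₀ : 1 ≤ p k₀ := le_trans (hq k₀) (hqp k₀).1
      have hmc : m < c := by omega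
      have hbc : b ≤ c := min_le_left _ _
      have hmb : m ≤ b := by omega
      have hcs : c ≤ s + ℓ := min_le_left _ _
      -- no index of [s, a k₀) lies in any active interval
      have noearly : ∀ j k : ℕ, s ≤ j → j < a k₀ → a k ≤ j → j < a k + p k → False := by
        intro j k hj1 hj2 hj3 hj4
        have hk : k₀ ≤ k := hk₀min k ⟨by omega, by omega⟩
        have := a_le_a horder hk
        omega
      have hunique : ∀ i k : ℕ, a k₀ ≤ i → i < a k₀ + p k₀ → a k ≤ i → i < a k + p k → k = k₀ :=
        fun i k h1 h2 h3 h4 => interval_eq horder h3 h4 h1 h2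
      -- Claim A : Ico s b ⊆ minset
      have claimA : ∀ i ∈ Finset.Ico s b, i ∈ minset a p q s ℓ := by
        intro i hi
        rw [Finset.mem_Ico] at hi
        rw [mem_minset]
        refine ⟨Finset.mem_Ico.mpr ⟨hi.1, by omega⟩, ?_⟩
        intro j hj hrel
        rw [Finset.mem_Ico] at hj
        by_contra hji
        push_neg at hji
        rcases hrel with rfl | ⟨k, hik1, hik2, hjk1, hjk2, hmod⟩
        · omega
        rcases lt_or_ge i (a k₀) with hcase | hcase
        · exact noearly i k hi.1 hcase hik1 hik2
        · have hik₀2 : i < a k₀ + p k₀ := by omega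
          have hkk : k = k₀ := hunique i k hcase hik₀2 hik1 hik2
          rw [hkk] at hik1 hik2 hjk1 hjk2 hmod
          have hdvd : q k₀ ∣ i - j := (Nat.modEq_iff_dvd' (le_of_lt hji)).mp hmod.symm
          have hqle : q k₀ ≤ i - j := Nat.le_of_dvd (by omega) hdvd
          omega
      -- Claim B : minset c (s+ℓ-c) ⊆ minset s ℓ
      have claimB : ∀ i ∈ minset a p q c (s + ℓ - c), i ∈ minset a p q s ℓ := by
        intro i hi
        rw [mem_minset] at hi ⊢
        obtain ⟨hi1, hi2⟩ := hi
        rw [Finset.mem_Ico] at hi1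
        have hi1' : c ≤ i ∧ i < s + ℓ := by omega
        refine ⟨Finset.mem_Ico.mpr ⟨by omega, hi1'.2⟩, ?_⟩
        intro j hj hrel
        rw [Finset.mem_Ico] at hj
        rcases le_or_gt c j with hcj | hcj
        · exact hi2 j (Finset.mem_Ico.mpr ⟨hcj, by omega⟩) hrel
        · rcases hrel with rfl | ⟨k, hik1, hik2, hjk1, hjk2, hmod⟩
          · omega
          exfalso
          rcases lt_or_ge j (a k₀) with hcase | hcase
          · exact noearly j k hj.1 hcase hjk1 hjk2
          · have hjk₀2 : j < a k₀ + p k₀ := by omega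
            have hkk : k = k₀ := hunique j k hcase hjk₀2 hjk1 hjk2
            rw [hkk] at hik1 hik2 hjk1 hjk2
            omega
      -- combine
      have hdisj : Disjoint (Finset.Ico s b) (minset a p q c (s + ℓ - c)) := by
        rw [Finset.disjoint_left]
        intro i hi hi'
        rw [Finset.mem_Ico] at hi
        rw [mem_minset, Finset.mem_Ico] at hi'
        omega
      have hsub : Finset.Ico s b ∪ minset a p q c (s + ℓ - c) ⊆ minset a p q s ℓ := by
        intro i hi
        rcases Finset.mem_union.mp hi with h | h
        · exact claimA i h
        · exact claimB i h
      have hcard : (b - s) + (minset a p q c (s + ℓ - c)).card ≤ (minset a p q s ℓ).card := by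
        have := Finset.card_le_card hsub
        rw [Finset.card_union_of_disjoint hdisj, Nat.card_Ico] at this
        exact this
      have hih : ((s + ℓ - c : ℕ) : ℝ) ≤ α * (minset a p q c (s + ℓ - c)).card :=
        ih (s + ℓ - c) (by omega) c
      have hαpos : (0:ℝ) < α := by linarith
      have hcm : (c - m : ℕ) ≤ p k₀ := by omega
      have hmin : ((c - s : ℕ) : ℝ) ≤ α * ((b - s : ℕ) : ℝ) := by
        have h1 : ((c - m : ℕ) : ℝ) ≤ α * ((b - m : ℕ) : ℝ) := by
          rcases le_or_gt (c - m) (q k₀) with h | h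
          · have hbm : (b - m : ℕ) = c - m := by omega
            rw [hbm]
            nlinarith [Nat.cast_nonneg (α := ℝ) (c - m)]
          · have hbm : (b - m : ℕ) = q k₀ := by omega
            rw [hbm]
            calc ((c - m : ℕ) : ℝ) ≤ (p k₀ : ℝ) := by exact_mod_cast hcm
              _ ≤ α * q k₀ := (hqp k₀).2
        have e1 : ((c - s : ℕ) : ℝ) = ((c - m : ℕ) : ℝ) + ((m - s : ℕ) : ℝ) := by
          rw [Nat.cast_sub (by omega : s ≤ c), Nat.cast_sub (by omega : m ≤ c),
            Nat.cast_sub (by omega : s ≤ m)]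
          ring
        have e2 : ((b - s : ℕ) : ℝ) = ((b - m : ℕ) : ℝ) + ((m - s : ℕ) : ℝ) := by
          rw [Nat.cast_sub (by omega : s ≤ b), Nat.cast_sub (by omega : m ≤ b),
            Nat.cast_sub (by omega : s ≤ m)]
          ring
        have h2 : ((m - s : ℕ) : ℝ) ≤ α * ((m - s : ℕ) : ℝ) := by
          nlinarith [Nat.cast_nonneg (α := ℝ) (m - s)]
        rw [e1, e2]
        linarith
      have hsplit : ((c - s : ℕ) : ℝ) + ((s + ℓ - c : ℕ) : ℝ) = (ℓ : ℝ) := by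
        have h : (c - s) + (s + ℓ - c) = ℓ := by omega
        exact_mod_cast h
      have hcard' : (((b - s) : ℕ) : ℝ) + ((minset a p q c (s + ℓ - c)).card : ℝ)
          ≤ ((minset a p q s ℓ).card : ℝ) := by exact_mod_cast hcard
      rw [← hsplit]
      calc ((c - s : ℕ) : ℝ) + ((s + ℓ - c : ℕ) : ℝ)
          ≤ α * ((b - s : ℕ) : ℝ) + α * (minset a p q c (s + ℓ - c)).card := by linarith
        _ = α * (((b - s : ℕ) : ℝ) + (minset a p q c (s + ℓ - c)).card) := by ring
        _ ≤ α * (minset a p q s ℓ).card := mul_le_mul_of_nonneg_left hcard' hαpos.le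
    · -- no active interval meets [s, s+ℓ): everything is minimal
      push_neg at hK
      have hms : minset a p q s ℓ = Finset.Ico s (s + ℓ) := by
        classical
        unfold minset
        rw [Finset.filter_true_of_mem]
        intro i hi j hj hrel
        rw [Finset.mem_Ico] at hi hj
        rcases hrel with rfl | ⟨k, hik1, hik2, hjk1, hjk2, hmod⟩
        · exact le_refl _
        · exact absurd (hK k) (by push_neg; constructor <;> omega)
      rw [hms, Nat.card_Ico]
      have : (ℓ : ℝ) ≥ 0 := Nat.cast_nonneg ℓ
      have h2 : ((s + ℓ - s : ℕ) : ℝ) = (ℓ : ℝ) := by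
        have : s + ℓ - s = ℓ := by omega
        exact_mod_cast this
      rw [h2]
      nlinarith

/-- Density of free bits: under the gap and period conditions, every interval of
length `ℓ` meets at least `ℓ/α` equivalence classes of the repetition pattern. -/
theorem free_bits_density (α : ℝ) (hα : 1 < α) (a p q : ℕ → ℕ)
    (hq : ∀ k, 1 ≤ q k)
    (hqp : ∀ k, q k ≤ p k ∧ (p k : ℝ) ≤ α * q k)
    (horder : ∀ k, a k + p k ≤ a (k + 1))
    (hgap : ∀ k, α * (p k + p (k + 1)) ≤ ((a (k + 1) : ℝ) - (a k + p k))) :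
    ∀ s ℓ : ℕ,
      (ℓ : ℝ) / α ≤ (((fun i => {j | patRel a p q i j}) '' Set.Ico s (s + ℓ)).ncard : ℝ) := by
  intro s ℓ
  have hαpos : (0:ℝ) < α := by linarith
  set f : ℕ → Set ℕ := fun i => {j | patRel a p q i j} with hf
  -- f is injective on minset
  have hinj : Set.InjOn f ↑(minset a p q s ℓ) := by
    intro i hi i' hi' hfe
    rw [Finset.mem_coe, mem_minset] at hi hi'
    have h1 : patRel a p q i i' := by
      have : i' ∈ f i' := patRel_refl a p q i'
      rw [← hfe] at this
      exact this
    have h2 := hi.2 i' hi'.1 h1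
    have h3 := hi'.2 i hi.1 (patRel_symm h1)
    omega
  have hsub : f '' ↑(minset a p q s ℓ) ⊆ f '' Set.Ico s (s + ℓ) := by
    apply Set.image_mono
    intro i hi
    rw [Finset.mem_coe, mem_minset, Finset.mem_Ico] at hi
    exact hi.1
  have hfin : (f '' Set.Ico s (s + ℓ)).Finite := (Set.finite_Ico _ _).image f
  have h1 : ((minset a p q s ℓ).card : ℕ) = (f '' ↑(minset a p q s ℓ)).ncard := by
    rw [Set.ncard_image_of_injOn hinj, Set.ncard_coe_finset]
  have h2 : (f '' ↑(minset a p q s ℓ)).ncard ≤ (f '' Set.Ico s (s + ℓ)).ncard :=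
    Set.ncard_le_ncard hsub hfin
  have hkey := key α hα a p q hq hqp horder ℓ s
  rw [div_le_iff₀ hαpos]
  have : ((minset a p q s ℓ).card : ℝ) ≤ ((f '' Set.Ico s (s + ℓ)).ncard : ℝ) := by
    exact_mod_cast h1 ▸ h2
  nlinarith
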